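/- For every n ≥ 0, the value max_{x,y ∈ [0,1]} min(n·x·y, (1-x)(1-y)) equals n(n+1-2√n)/(n-1)² when n > 1, and this maximum is attained at x = y = (√n - 1)/(n - 1). -/

import Mathlib

theorem stmt_0 (n : ℝ) (hn : 1 < n) :
    let x₀ := (Real.sqrt n - 1) / (n - 1)
    ((x₀, x₀) ∈ Set.Icc (0:ℝ) 1 ×ˢ Set.Icc (0:ℝ) 1) ∧
    IsMaxOn (fun p : ℝ × ℝ => min (n * p.1 * p.2) ((1 - p.1) * (1 - p.2)))
      (Set.Icc (0:ℝ) 1 ×ˢ Set.Icc (0:ℝ) 1) (x₀, x₀) ∧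
    min (n * x₀ * x₀) ((1 - x₀) * (1 - x₀)) = n * (n + 1 - 2 * Real.sqrt n) / (n - 1) ^ 2 := by
  intro x₀
  set s := Real.sqrt n with hs
  have hn0 : (0:ℝ) ≤ n := by linarith
  have hs2 : s ^ 2 = n := Real.sq_sqrt hn0
  have hs0 : 0 ≤ s := Real.sqrt_nonneg n
  have hs1 : 1 < s := by nlinarith
  have hx0 : x₀ = 1 / (s + 1) := by
    show (s - 1) / (n - 1) = 1 / (s + 1)
    rw [div_eq_div_iff (by linarith) (by linarith)]
    nlinarith
  have hx00 : 0 ≤ x₀ := by rw [hx0]; positivity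
  have hx01 : x₀ ≤ 1 := by
    rw [hx0, div_le_one (by linarith)]; linarith
  have hx0mem : x₀ ∈ Set.Icc (0:ℝ) 1 := ⟨hx00, hx01⟩
  have hkey : n * x₀ * x₀ = (1 - x₀) * (1 - x₀) := by
    rw [hx0]; field_simp; nlinarith
  have hval : min (n * x₀ * x₀) ((1 - x₀) * (1 - x₀)) = n * x₀ * x₀ := by
    rw [hkey, min_self]
  refine ⟨⟨hx0mem, hx0mem⟩, ?_, ?_⟩
  · intro p hp
    obtain ⟨⟨hx0p, hx1p⟩, hy0p, hy1p⟩ := hp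
    simp only [Set.mem_setOf_eq, hval]
    rcases le_or_gt (p.1 + p.2) (2 * x₀) with h | h
    · have h1 : p.1 * p.2 ≤ x₀ * x₀ := by nlinarith [sq_nonneg (p.1 - p.2)]
      have h2 : n * (p.1 * p.2) ≤ n * (x₀ * x₀) := by
        exact mul_le_mul_of_nonneg_left h1 hn0
      calc min (n * p.1 * p.2) ((1 - p.1) * (1 - p.2)) ≤ n * p.1 * p.2 :=
            min_le_left _ _
        _ ≤ n * x₀ * x₀ := by nlinarith
    · have h1 : (1 - p.1) * (1 - p.2) ≤ (1 - x₀) * (1 - x₀) := by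
        nlinarith [sq_nonneg (p.1 - p.2)]
      calc min (n * p.1 * p.2) ((1 - p.1) * (1 - p.2)) ≤ (1 - p.1) * (1 - p.2) :=
            min_le_right _ _
        _ ≤ (1 - x₀) * (1 - x₀) := h1
        _ = n * x₀ * x₀ := hkey.symm
  · rw [hval]
    show n * ((s - 1) / (n - 1)) * ((s - 1) / (n - 1)) = n * (n + 1 - 2 * s) / (n - 1) ^ 2
    have hne : n - 1 ≠ 0 := by linarith
    field_simp
    linear_combination hs2
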